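/- Let p be a prime, P = (r₀/t₀², s₀/t₀³) a rational point in lowest terms on E_p: y² = x³ − 21p x² + 972p³ (equivalently y² = (x+6p)(x−9p)(x−18p)) with t₀ even. Write 2P = (r₁/t₁², s₁/t₁³) in lowest terms. Then t₁ is even. Moreover, if gcd(s₀, 3p) = 1 then gcd(s₁, 3p) = 1. -/

import Mathlib

/-- Let `P = (r₀/t₀², s₀/t₀³)` be a rational point in lowest terms on
`E_p : y² = x³ − 21px² + 972p³` with `t₀` even, and let `2P = (r₁/t₁², s₁/t₁³)` in lowest
terms, where by the duplication formula
`x(2P) = (r₀⁴ − 8·972p³·r₀t₀⁶ + 4·21p·972p³·t₀⁸)/(4s₀²t₀²)`.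
Then `t₁` is even, and if `gcd(s₀, 3p) = 1` then `gcd(s₁, 3p) = 1`. -/
theorem stmt16 (p : ℕ) (hp : p.Prime) (r₀ s₀ t₀ r₁ s₁ t₁ : ℤ)
    (ht₀ : t₀ ≠ 0) (ht₁ : t₁ ≠ 0) (hs₀ : s₀ ≠ 0)
    (hrt₀ : Int.gcd r₀ t₀ = 1) (hst₀ : Int.gcd s₀ t₀ = 1)
    (hrt₁ : Int.gcd r₁ t₁ = 1) (hst₁ : Int.gcd s₁ t₁ = 1)
    (hP₀ : s₀ ^ 2 = r₀ ^ 3 - 21 * p * r₀ ^ 2 * t₀ ^ 2 + 972 * p ^ 3 * t₀ ^ 6)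
    (hP₁ : s₁ ^ 2 = r₁ ^ 3 - 21 * p * r₁ ^ 2 * t₁ ^ 2 + 972 * p ^ 3 * t₁ ^ 6)
    (hx : (r₁ : ℚ) / (t₁ : ℚ) ^ 2 =
      ((r₀ : ℚ) ^ 4 - 8 * (972 * (p : ℚ) ^ 3) * r₀ * (t₀ : ℚ) ^ 6 +
        4 * (21 * (p : ℚ)) * (972 * (p : ℚ) ^ 3) * (t₀ : ℚ) ^ 8) /
        (4 * (s₀ : ℚ) ^ 2 * (t₀ : ℚ) ^ 2))
    (heven : Even t₀) :
    Even t₁ ∧ (Int.gcd s₀ (3 * p) = 1 → Int.gcd s₁ (3 * p) = 1) := by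
  have key : r₁ * (4 * s₀ ^ 2 * t₀ ^ 2) =
      (r₀ ^ 4 - 8 * (972 * (p:ℤ) ^ 3) * r₀ * t₀ ^ 6 +
        4 * (21 * (p:ℤ)) * (972 * (p:ℤ) ^ 3) * t₀ ^ 8) * t₁ ^ 2 := by
    have hq : ((r₁ * (4 * s₀ ^ 2 * t₀ ^ 2) : ℤ) : ℚ) =
        ((r₀ ^ 4 - 8 * (972 * (p:ℤ) ^ 3) * r₀ * t₀ ^ 6 +
        4 * (21 * (p:ℤ)) * (972 * (p:ℤ) ^ 3) * t₀ ^ 8) * t₁ ^ 2 : ℤ) := by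
      push_cast
      field_simp at hx
      linear_combination hx
    exact_mod_cast hq
  set N : ℤ := r₀ ^ 4 - 8 * (972 * (p:ℤ) ^ 3) * r₀ * t₀ ^ 6 +
        4 * (21 * (p:ℤ)) * (972 * (p:ℤ) ^ 3) * t₀ ^ 8 with hN
  have hr₀odd : Odd r₀ := by
    rcases Int.even_or_odd r₀ with he | ho
    · exfalso
      have h2 : (2:ℤ) ∣ Int.gcd r₀ t₀ :=
        Int.dvd_coe_gcd (even_iff_two_dvd.mp he) (even_iff_two_dvd.mp heven)
      rw [hrt₀] at h2
      norm_num at h2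
    · exact ho
  have hNodd : Odd N := by
    have h1 : Odd (r₀ ^ 4) := hr₀odd.pow
    have h2 : Even (8 * (972 * (p:ℤ) ^ 3) * r₀ * t₀ ^ 6) := by
      refine even_iff_two_dvd.mpr ?_
      exact Dvd.dvd.mul_right (Dvd.dvd.mul_right (Dvd.dvd.mul_right (by norm_num) _) _) _
    have h3 : Even (4 * (21 * (p:ℤ)) * (972 * (p:ℤ) ^ 3) * t₀ ^ 8) := by
      refine even_iff_two_dvd.mpr ?_
      exact Dvd.dvd.mul_right (Dvd.dvd.mul_right (Dvd.dvd.mul_right (by norm_num) _) _) _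
    exact (h1.sub_even h2).add_even h3
  have hteven : Even t₁ := by
    have h2 : (2:ℤ) ∣ N * t₁ ^ 2 := by
      rw [← key]
      exact Dvd.dvd.mul_left (Dvd.dvd.mul_right (Dvd.dvd.mul_right (by norm_num) _) _) _
    rcases (Int.prime_two.dvd_mul.mp h2) with h | h
    · exact absurd (even_iff_two_dvd.mpr h) (Int.not_even_iff_odd.mpr hNodd)
    · exact even_iff_two_dvd.mpr (Int.prime_two.dvd_of_dvd_pow h)
  refine ⟨hteven, fun hcop => ?_⟩
  by_contra hne
  set g : ℕ := Int.gcd s₁ (3 * (p:ℤ)) with hg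
  have hg0 : g ≠ 0 := by
    intro h0
    have h1 : (3 * (p:ℤ)) = 0 := (Int.gcd_eq_zero_iff.mp h0).2
    have hp0 := hp.pos
    omega
  have hqp : g.minFac.Prime := Nat.minFac_prime (by omega)
  set q : ℕ := g.minFac with hq
  have hqZ : Prime (q:ℤ) := Int.prime_iff_natAbs_prime.mpr (by simpa using hqp)
  have hqg : (q:ℤ) ∣ (g:ℤ) := Int.natCast_dvd_natCast.mpr (Nat.minFac_dvd g)
  have hqs₁ : (q:ℤ) ∣ s₁ := hqg.trans (Int.gcd_dvd_left _ _)
  have hq3p : (q:ℤ) ∣ 3 * (p:ℤ) := hqg.trans (Int.gcd_dvd_right _ _)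
  have hq21p : (q:ℤ) ∣ 21 * (p:ℤ) := hq3p.trans ⟨7, by ring⟩
  have hq972p3 : (q:ℤ) ∣ 972 * (p:ℤ) ^ 3 := hq3p.trans ⟨324 * (p:ℤ) ^ 2, by ring⟩
  have hqr₁ : (q:ℤ) ∣ r₁ := by
    refine hqZ.dvd_of_dvd_pow (n := 3) ?_
    have heq : r₁ ^ 3 = s₁ ^ 2 + 21 * (p:ℤ) * r₁ ^ 2 * t₁ ^ 2 - 972 * (p:ℤ) ^ 3 * t₁ ^ 6 := by
      rw [hP₁]; ring
    rw [heq]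
    exact dvd_sub (dvd_add (dvd_pow hqs₁ two_ne_zero)
      ((hq21p.mul_right (r₁ ^ 2)).mul_right (t₁ ^ 2))) (hq972p3.mul_right (t₁ ^ 6))
  have hqt₁ : ¬ (q:ℤ) ∣ t₁ := by
    intro h
    have : (q:ℤ) ∣ Int.gcd r₁ t₁ := Int.dvd_coe_gcd hqr₁ h
    rw [hrt₁] at this
    have := Int.le_of_dvd one_pos this
    have := hqp.two_le
    omega
  have hqN : (q:ℤ) ∣ N := by
    have h1 : (q:ℤ) ∣ N * t₁ ^ 2 := by
      rw [← key]; exact hqr₁.mul_right _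
    rcases hqZ.dvd_mul.mp h1 with h | h
    · exact h
    · exact absurd (hqZ.dvd_of_dvd_pow h) hqt₁
  have hqr₀ : (q:ℤ) ∣ r₀ := by
    refine hqZ.dvd_of_dvd_pow (n := 4) ?_
    have heq : r₀ ^ 4 = N + 8 * (972 * (p:ℤ) ^ 3) * r₀ * t₀ ^ 6 -
        4 * (21 * (p:ℤ)) * (972 * (p:ℤ) ^ 3) * t₀ ^ 8 := by
      rw [hN]; ring
    rw [heq]
    exact dvd_sub (dvd_add hqN (((hq972p3.mul_left 8).mul_right r₀).mul_right (t₀ ^ 6)))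
      (((hq21p.mul_left 4).mul_right (972 * (p:ℤ) ^ 3)).mul_right (t₀ ^ 8))
  have hqs₀ : (q:ℤ) ∣ s₀ := by
    refine hqZ.dvd_of_dvd_pow (n := 2) ?_
    rw [hP₀]
    exact dvd_add (dvd_sub (dvd_pow hqr₀ three_ne_zero)
      ((hq21p.mul_right (r₀ ^ 2)).mul_right (t₀ ^ 2))) (hq972p3.mul_right (t₀ ^ 6))
  have : (q:ℤ) ∣ Int.gcd s₀ (3 * (p:ℤ)) := Int.dvd_coe_gcd hqs₀ hq3p
  rw [hcop] at this
  have := Int.le_of_dvd one_pos this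
  have := hqp.two_le
  omega
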